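/- Let H₀ be a bounded self-adjoint operator on the complex Hilbert space ℓ²(ℤᵈ), let Λ ⊆ ℤᵈ, and let V^Λ be a bounded self-adjoint operator on ℓ²(Λ). For every z ∈ ℂ with Im z ≠ 0: the restricted free resolvent G₀^Λ(z) is invertible in the bounded operators on ℓ²(Λ), the operator 1 − G₀^Λ(z)V^Λ is invertible, the operator G₀^Λ(z)⁻¹ − V^Λ is invertible, and the restricted perturbed resolvent satisfies G^Λ(z) = (G₀^Λ(z)⁻¹ − V^Λ)⁻¹ = (1 − G₀^Λ(z)V^Λ)⁻¹ G₀^Λ(z). -/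

import Mathlib

noncomputable section

open ContinuousLinearMap


open ContinuousLinearMap Complex
open scoped NNReal


variable {E F : Type*} [NormedAddCommGroup E] [InnerProductSpace ℂ E] [CompleteSpace E]
  [NormedAddCommGroup F] [InnerProductSpace ℂ F] [CompleteSpace F]

local notation "⟪" x ", " y "⟫" => @inner ℂ _ _ x y

lemma aux_unit (H : E →L[ℂ] E) (hH : IsSelfAdjoint H) (z : ℂ) (hz : z.im ≠ 0) :
    IsUnit (z • (1 : E →L[ℂ] E) - H) := by
  rw [← Algebra.algebraMap_eq_smul_one]
  exact spectrum.notMem_iff.mp (fun h => hz (hH.im_eq_zero_of_mem_spectrum h))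

lemma aux_G0_unit [Nontrivial E] (H : E →L[ℂ] E) (hH : IsSelfAdjoint H)
    (Φ : E →L[ℂ] F) (hco : Φ ∘L ContinuousLinearMap.adjoint Φ = 1)
    (z : ℂ) (hz : z.im ≠ 0) :
    IsUnit (Φ ∘L Ring.inverse (z • (1 : E →L[ℂ] E) - H) ∘L ContinuousLinearMap.adjoint Φ) := by
  set A := z • (1 : E →L[ℂ] E) - H with hA
  have hUA : IsUnit A := aux_unit H hH z hz
  set R := Ring.inverse A with hR
  have hAR : A * R = 1 := Ring.mul_inverse_cancel A hUA
  have hApos : 0 < ‖A‖ := by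
    rcases eq_or_ne A 0 with h | h
    · exfalso
      have : (1 : E →L[ℂ] E) = 0 := by rw [← hAR, h, zero_mul]
      exact one_ne_zero this
    · exact norm_pos_iff.mpr h
  set c : ℝ≥0 := ⟨|z.im| / ‖A‖ ^ 2, by positivity⟩ with hc
  have hcpos : 0 < c := by
    rw [← NNReal.coe_pos]
    have hzim : |z.im| > 0 := abs_pos.mpr hz
    show (0 : ℝ) < |z.im| / ‖A‖ ^ 2
    positivity
  apply ContinuousLinearMap.isUnit_of_forall_le_norm_inner_map _ hcpos
  intro f
  set g := ContinuousLinearMap.adjoint Φ f with hg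
  set h := R g with hh
  have hAh : A h = g := by
    have := congrFun (congrArg (fun T : E →L[ℂ] E => (T : E → E)) hAR) g
    simpa [ContinuousLinearMap.mul_apply] using this
  have hgf : ‖g‖ = ‖f‖ := by
    have h1 : ⟪g, g⟫ = ⟪f, f⟫ := by
      rw [hg, ContinuousLinearMap.adjoint_inner_left]
      have := congrFun (congrArg (fun T : F →L[ℂ] F => (T : F → F)) hco) f
      simp only [ContinuousLinearMap.coe_comp', Function.comp_apply,
        ContinuousLinearMap.one_apply] at this
      rw [this]
    rw [inner_self_eq_norm_sq_to_K (𝕜 := ℂ) g, inner_self_eq_norm_sq_to_K (𝕜 := ℂ) f] at h1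
    have h2 : ‖g‖ ^ 2 = ‖f‖ ^ 2 := by exact_mod_cast h1
    rw [← Real.sqrt_sq (norm_nonneg g), ← Real.sqrt_sq (norm_nonneg f), h2]
  -- the inner product value
  have hinner : ⟪(Φ ∘L R ∘L ContinuousLinearMap.adjoint Φ) f, f⟫ = ⟪h, A h⟫ := by
    simp only [ContinuousLinearMap.coe_comp', Function.comp_apply]
    rw [← ContinuousLinearMap.adjoint_inner_right Φ (R g) f, ← hg, ← hh, hAh]
  -- ⟪h, g⟫ with g = A h = z h - H h
  have hre : ⟪h, H h⟫ = (⟪h, H h⟫).re := by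
    have h1 : ⟪H h, h⟫ = ⟪h, H h⟫ := by
      conv_lhs => rw [← hH.adjoint_eq]
      exact ContinuousLinearMap.adjoint_inner_left H h h
    have h2 : (starRingEnd ℂ) ⟪h, H h⟫ = ⟪h, H h⟫ := by
      rw [inner_conj_symm]; exact h1
    exact (Complex.conj_eq_iff_re.mp h2).symm
  have hval : ⟪h, A h⟫ = z * (‖h‖ : ℂ) ^ 2 - ⟪h, H h⟫ := by
    rw [hA]
    simp only [ContinuousLinearMap.sub_apply, ContinuousLinearMap.smul_apply,
      ContinuousLinearMap.one_apply, inner_sub_right, inner_smul_right]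
    rw [inner_self_eq_norm_sq_to_K (𝕜 := ℂ) h]
    norm_cast
  have h0 : (⟪h, H h⟫).im = 0 := by rw [hre, Complex.ofReal_im]
  have him : (⟪h, A h⟫).im = z.im * ‖h‖ ^ 2 := by
    rw [hval, Complex.sub_im, h0, sub_zero, ← Complex.ofReal_pow, Complex.mul_im,
      Complex.ofReal_re, Complex.ofReal_im]
    ring
  have hnorm : ‖f‖ ≤ ‖A‖ * ‖h‖ := by rw [← hgf, ← hAh]; exact A.le_opNorm h
  rw [hinner]
  calc ‖f‖ ^ 2 * (c : ℝ) = ‖f‖ ^ 2 * (|z.im| / ‖A‖ ^ 2) := rfl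
    _ ≤ |z.im| * ‖h‖ ^ 2 := by
        rw [← mul_div_assoc, div_le_iff₀ (by positivity : (0:ℝ) < ‖A‖ ^ 2)]
        have h1 : ‖f‖ ^ 2 ≤ (‖A‖ * ‖h‖) ^ 2 := by
          apply pow_le_pow_left₀ (norm_nonneg f) hnorm
        have h2 : 0 ≤ |z.im| := abs_nonneg _
        nlinarith
    _ = |(⟪h, A h⟫).im| := by
        rw [him, abs_mul, _root_.abs_of_nonneg (sq_nonneg (‖h‖ : ℝ))]
    _ ≤ ‖⟪h, A h⟫‖ := by exact Complex.abs_im_le_norm _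


set_option maxHeartbeats 1600000 in
/-- For a bounded self-adjoint `H₀` on `ℓ²(ℤᵈ)`, a subset `Λ ⊆ ℤᵈ` with
restriction map `Φ : ℓ²(ℤᵈ) → ℓ²(Λ)`, and a bounded self-adjoint perturbation `VΛ` on `ℓ²(Λ)`:
for every `z` with `Im z ≠ 0`, the restricted free resolvent `G₀^Λ(z) = Φ (z - H₀)⁻¹ Φ*`
is invertible, `1 - G₀^Λ(z) VΛ` and `G₀^Λ(z)⁻¹ - VΛ` are invertible, and the restricted
perturbed resolvent satisfies
`G^Λ(z) = (G₀^Λ(z)⁻¹ - VΛ)⁻¹ = (1 - G₀^Λ(z) VΛ)⁻¹ G₀^Λ(z)`. -/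
theorem stmt0 (d : ℕ) (Λ : Set (Fin d → ℤ))
    (H₀ : lp (fun _ : Fin d → ℤ => ℂ) 2 →L[ℂ] lp (fun _ : Fin d → ℤ => ℂ) 2)
    (hH₀ : IsSelfAdjoint H₀)
    (Φ : lp (fun _ : Fin d → ℤ => ℂ) 2 →L[ℂ] lp (fun _ : Λ => ℂ) 2)
    (hΦ : ∀ (f : lp (fun _ : Fin d → ℤ => ℂ) 2) (n : Λ), (Φ f) n = f n)
    (hΦcoiso : Φ ∘L ContinuousLinearMap.adjoint Φ = 1)
    (VΛ : lp (fun _ : Λ => ℂ) 2 →L[ℂ] lp (fun _ : Λ => ℂ) 2)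
    (hVΛ : IsSelfAdjoint VΛ)
    (z : ℂ) (hz : z.im ≠ 0) :
    -- the full and restricted resolvents and the perturbed Hamiltonian
    ∀ G₀Λ GΛ : lp (fun _ : Λ => ℂ) 2 →L[ℂ] lp (fun _ : Λ => ℂ) 2,
      G₀Λ = Φ ∘L Ring.inverse (z • 1 - H₀) ∘L ContinuousLinearMap.adjoint Φ →
      GΛ = Φ ∘L Ring.inverse (z • 1 -
          (H₀ + (ContinuousLinearMap.adjoint Φ) ∘L VΛ ∘L Φ)) ∘L ContinuousLinearMap.adjoint Φ →
      IsUnit G₀Λ ∧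
      IsUnit (1 - G₀Λ * VΛ) ∧
      IsUnit (Ring.inverse G₀Λ - VΛ) ∧
      GΛ = Ring.inverse (Ring.inverse G₀Λ - VΛ) ∧
      GΛ = Ring.inverse (1 - G₀Λ * VΛ) * G₀Λ := by
  intro G₀Λ GΛ hG₀ hG
  haveI hnt : Nontrivial (lp (fun _ : Fin d → ℤ => ℂ) 2) := by
    refine ⟨lp.single 2 (default : Fin d → ℤ) 1, 0, fun hc => ?_⟩
    have h1 := congrArg (fun v : lp (fun _ : Fin d → ℤ => ℂ) 2 =>
      (v : (Fin d → ℤ) → ℂ) (default : Fin d → ℤ)) hc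
    simp only [lp.single_apply_self] at h1
    simp at h1
  -- the perturbation
  set W := ContinuousLinearMap.adjoint Φ ∘L VΛ ∘L Φ with hW_def
  have hWsa : IsSelfAdjoint W := by
    rw [ContinuousLinearMap.isSelfAdjoint_iff', hW_def, ContinuousLinearMap.adjoint_comp,
      ContinuousLinearMap.adjoint_comp, ContinuousLinearMap.adjoint_adjoint, hVΛ.adjoint_eq,
      ContinuousLinearMap.comp_assoc]
  have hHsa : IsSelfAdjoint (H₀ + W) := hH₀.add hWsa
  set A := z • (1 : lp (fun _ : Fin d → ℤ => ℂ) 2 →L[ℂ] lp (fun _ : Fin d → ℤ => ℂ) 2) - H₀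
    with hA_def
  set B := z • (1 : lp (fun _ : Fin d → ℤ => ℂ) 2 →L[ℂ] lp (fun _ : Fin d → ℤ => ℂ) 2)
    - (H₀ + W) with hB_def
  have hUA : IsUnit A := aux_unit H₀ hH₀ z hz
  have hUB : IsUnit B := aux_unit (H₀ + W) hHsa z hz
  have hU0 : IsUnit G₀Λ := by
    rw [hG₀]; exact aux_G0_unit H₀ hH₀ Φ hΦcoiso z hz
  set Ra := Ring.inverse A with hRa_def
  set Rb := Ring.inverse B with hRb_def
  have e1 : Ra * A = 1 := Ring.inverse_mul_cancel A hUA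
  have e1' : A * Ra = 1 := Ring.mul_inverse_cancel A hUA
  have e2 : B * Rb = 1 := Ring.mul_inverse_cancel B hUB
  have e2' : Rb * B = 1 := Ring.inverse_mul_cancel B hUB
  have hW : W = A - B := by rw [hA_def, hB_def]; abel
  have hres : Rb = Ra + Ra * W * Rb := by
    have h3 : Ra * W * Rb = Rb - Ra := by
      calc Ra * W * Rb = Ra * (A - B) * Rb := by rw [← hW]
        _ = (Ra * A) * Rb - Ra * (B * Rb) := by noncomm_ring
        _ = Rb - Ra := by rw [e1, e2, one_mul, mul_one]
    rw [h3]; abel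
  have hres2 : Rb = Ra + Rb * W * Ra := by
    have h3 : Rb * W * Ra = Rb - Ra := by
      calc Rb * W * Ra = Rb * (A - B) * Ra := by rw [← hW]
        _ = Rb * (A * Ra) - (Rb * B) * Ra := by noncomm_ring
        _ = Rb - Ra := by rw [e1', e2', mul_one, one_mul]
    rw [h3]; abel
  have key1 : GΛ = G₀Λ + G₀Λ * VΛ * GΛ := by
    rw [hG, hG₀]
    conv_lhs => rw [hres]
    simp only [hW_def, ContinuousLinearMap.mul_def, ContinuousLinearMap.add_comp,
      ContinuousLinearMap.comp_add, ContinuousLinearMap.comp_assoc]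
  have key2 : GΛ = G₀Λ + GΛ * VΛ * G₀Λ := by
    rw [hG, hG₀]
    conv_lhs => rw [hres2]
    simp only [hW_def, ContinuousLinearMap.mul_def, ContinuousLinearMap.add_comp,
      ContinuousLinearMap.comp_add, ContinuousLinearMap.comp_assoc]
  set s := Ring.inverse G₀Λ with hs_def
  have e0 : s * G₀Λ = 1 := Ring.inverse_mul_cancel _ hU0
  have e0' : G₀Λ * s = 1 := Ring.mul_inverse_cancel _ hU0
  have k1 : GΛ - G₀Λ * VΛ * GΛ = G₀Λ := by nth_rewrite 1 [key1]; abel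
  have k2 : GΛ - GΛ * VΛ * G₀Λ = G₀Λ := by nth_rewrite 1 [key2]; abel
  have h1 : (s - VΛ) * GΛ = 1 := by
    calc (s - VΛ) * GΛ = s * (GΛ - G₀Λ * VΛ * GΛ) := by
          rw [mul_sub, sub_mul, ← mul_assoc, ← mul_assoc, e0, one_mul]
      _ = s * G₀Λ := by rw [k1]
      _ = 1 := e0
  have h2 : GΛ * (s - VΛ) = 1 := by
    calc GΛ * (s - VΛ) = (GΛ - GΛ * VΛ * G₀Λ) * s := by
          rw [mul_sub, sub_mul, mul_assoc, mul_assoc, e0', mul_one]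
      _ = G₀Λ * s := by rw [k2]
      _ = 1 := e0'
  have hsV : IsUnit (s - VΛ) := ⟨⟨s - VΛ, GΛ, h1, h2⟩, rfl⟩
  have h4 : Ring.inverse (s - VΛ) = GΛ := Ring.inverse_unit ⟨s - VΛ, GΛ, h1, h2⟩
  have hfact : 1 - G₀Λ * VΛ = G₀Λ * (s - VΛ) := by rw [mul_sub, e0']
  have p1 : (G₀Λ * (s - VΛ)) * (GΛ * s) = 1 := by
    rw [mul_assoc, ← mul_assoc (s - VΛ), h1, one_mul, e0']
  have p2 : (GΛ * s) * (G₀Λ * (s - VΛ)) = 1 := by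
    rw [mul_assoc, ← mul_assoc s, e0, one_mul, h2]
  have h5 : Ring.inverse (G₀Λ * (s - VΛ)) = GΛ * s :=
    Ring.inverse_unit ⟨G₀Λ * (s - VΛ), GΛ * s, p1, p2⟩
  refine ⟨hU0, ?_, hsV, h4.symm, ?_⟩
  · rw [hfact]; exact hU0.mul hsV
  · rw [hfact, h5, mul_assoc, e0, mul_one]
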